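/- Let k = Q(√5), O_k = Z[(1+√5)/2], u = (1+√5)/2. There does not exist α ∈ Z[ζ5] with α·ᾱ = 4 + u, even though 4 + u is totally positive in O_k. -/

import Mathlib

noncomputable section
open Complex ComplexConjugate

/-- A primitive fifth root of unity. -/
def ζ : ℂ := Complex.exp (2 * Real.pi * Complex.I / 5)

/-- The fundamental unit `(1 + √5)/2` of `k = ℚ(√5)`. -/
def u5 : ℂ := (1 + Real.sqrt 5) / 2

/-- The ring of integers `𝒪 = ℤ[ζ₅]` of `F = ℚ(ζ₅)`, as a subalgebra of `ℂ`. -/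
def OF : Subalgebra ℤ ℂ := Algebra.adjoin ℤ {ζ}

/-- The ring of integers `𝒪_k = ℤ[(1+√5)/2]` of `k = ℚ(√5)`, as a subalgebra of `ℂ`. -/
def Ok : Subalgebra ℤ ℂ := Algebra.adjoin ℤ {u5}

/-- The field `F = ℚ(ζ₅)`, as a `ℚ`-subalgebra of `ℂ`. -/
def Fq : Subalgebra ℚ ℂ := Algebra.adjoin ℚ {ζ}

/-- An element of `𝒪_k` is totally positive if every real embedding sends it to a
positive real. -/
def TotPos (x : Ok) : Prop := ∀ f : Ok →+* ℝ, 0 < f x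


section AuxLemmas
open Polynomial


lemma hprim : IsPrimitiveRoot ζ 5 := by
  have := Complex.isPrimitiveRoot_exp 5 (by norm_num)
  simpa [ζ] using this

lemma h5 : ζ^5 = 1 := hprim.pow_eq_one
lemma hζne1 : ζ ≠ 1 := hprim.ne_one (by norm_num)
lemma hζne0 : ζ ≠ 0 := by
  intro h; have := h5; rw [h] at this; simp at this
lemma hsum : ζ^4 + ζ^3 + ζ^2 + ζ + 1 = 0 := by
  have h : (ζ - 1) * (ζ^4 + ζ^3 + ζ^2 + ζ + 1) = 0 := by
    linear_combination h5
  rcases mul_eq_zero.1 h with h | h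
  · exact absurd (sub_eq_zero.1 h) hζne1
  · exact h


lemma hθ : ζ = Complex.exp ((2*Real.pi/5 : ℝ) * Complex.I) := by
  rw [ζ]; congr 1; push_cast; ring

lemma hre : ζ = (Real.cos (2*Real.pi/5) : ℂ) + (Real.sin (2*Real.pi/5) : ℂ) * Complex.I := by
  rw [hθ, Complex.exp_mul_I]
  simp [Complex.ofReal_cos, Complex.ofReal_sin]

lemma hconjζ : conj ζ = ζ^4 := by
  have hcs : ((Real.cos (2*Real.pi/5) : ℂ))^2 + ((Real.sin (2*Real.pi/5) : ℂ))^2 = 1 := by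
    have h1 : Real.cos (2*Real.pi/5)^2 + Real.sin (2*Real.pi/5)^2 = 1 := by
      linarith [Real.sin_sq_add_cos_sq (2*Real.pi/5)]
    exact_mod_cast h1
  have h1 : conj ζ * ζ = 1 := by
    rw [hre]
    simp only [map_add, map_mul, Complex.conj_ofReal, Complex.conj_I]
    linear_combination hcs - ((Real.sin (2*Real.pi/5) : ℂ))^2 * Complex.I_sq
  have h2 : ζ^4 * ζ = 1 := by linear_combination h5
  exact mul_right_cancel₀ hζne0 (h1.trans h2.symm)

lemma hsval : ζ + ζ^4 = ((2 * Real.cos (2*Real.pi/5) : ℝ) : ℂ) := by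
  rw [show ζ^4 = conj ζ from hconjζ.symm]
  rw [hre]
  simp only [map_add, map_mul, Complex.conj_ofReal, Complex.conj_I]
  push_cast
  ring

lemma hs : ζ + ζ^4 = (((Real.sqrt 5 - 1)/2 : ℝ) : ℂ) := by
  set t : ℝ := 2 * Real.cos (2*Real.pi/5) with ht
  have hcx : (ζ + ζ^4)^2 + (ζ + ζ^4) = 1 := by
    linear_combination (ζ^3 + 2) * h5 + hsum
  have htr : t^2 + t = 1 := by
    have h0 := hcx
    rw [hsval] at h0
    exact_mod_cast h0
  have hpos : 0 < Real.cos (2*Real.pi/5) := by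
    apply Real.cos_pos_of_mem_Ioo
    constructor <;> nlinarith [Real.pi_pos]
  have h5' : Real.sqrt 5 ^ 2 = 5 := Real.sq_sqrt (by norm_num)
  have hfact : (t - (Real.sqrt 5 - 1)/2) * (t + (Real.sqrt 5 + 1)/2) = 0 := by
    linear_combination htr - (1/4) * h5'
  have h2pos : t + (Real.sqrt 5 + 1)/2 > 0 := by
    have := Real.sqrt_nonneg 5
    nlinarith
  have heq : t = (Real.sqrt 5 - 1)/2 := by
    rcases mul_eq_zero.1 hfact with h | h
    · linarith [sub_eq_zero.1 h]
    · nlinarith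
  rw [hsval]
  exact_mod_cast heq

lemma indep (m0 m1 m2 m3 : ℤ)
    (h : (m0:ℂ) + m1*ζ + m2*ζ^2 + m3*ζ^3 = 0) :
    m0 = 0 ∧ m1 = 0 ∧ m2 = 0 ∧ m3 = 0 := by
  set q : ℚ[X] := C (m0:ℚ) + C (m1:ℚ)*X + C (m2:ℚ)*X^2 + C (m3:ℚ)*X^3 with hqdef
  have hq : aeval ζ q = 0 := by
    simp only [hqdef, map_add, map_mul, aeval_C, aeval_X, map_pow]
    push_cast
    exact_mod_cast h
  by_cases hq0 : q = 0
  · refine ⟨?_, ?_, ?_, ?_⟩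
    · have := congrArg (fun p => Polynomial.coeff p 0) hq0
      simp only [hqdef, Polynomial.coeff_add, Polynomial.coeff_C_mul,
        Polynomial.coeff_C, Polynomial.coeff_X_pow, Polynomial.coeff_X,
        Polynomial.coeff_zero] at this
      norm_num at this
      exact_mod_cast this
    · have := congrArg (fun p => Polynomial.coeff p 1) hq0
      simp only [hqdef, Polynomial.coeff_add, Polynomial.coeff_C_mul,
        Polynomial.coeff_C, Polynomial.coeff_X_pow, Polynomial.coeff_X,
        Polynomial.coeff_zero] at this
      norm_num at this
      exact_mod_cast this
    · have := congrArg (fun p => Polynomial.coeff p 2) hq0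
      simp only [hqdef, Polynomial.coeff_add, Polynomial.coeff_C_mul,
        Polynomial.coeff_C, Polynomial.coeff_X_pow, Polynomial.coeff_X,
        Polynomial.coeff_zero] at this
      norm_num at this
      exact_mod_cast this
    · have := congrArg (fun p => Polynomial.coeff p 3) hq0
      simp only [hqdef, Polynomial.coeff_add, Polynomial.coeff_C_mul,
        Polynomial.coeff_C, Polynomial.coeff_X_pow, Polynomial.coeff_X,
        Polynomial.coeff_zero] at this
      norm_num at this
      exact_mod_cast this
  · exfalso
    have hdvd : minpoly ℚ ζ ∣ q := minpoly.dvd ℚ ζ hq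
    have hmin : minpoly ℚ ζ = Polynomial.cyclotomic 5 ℚ :=
      (Polynomial.cyclotomic_eq_minpoly_rat hprim (by norm_num)).symm
    have hdeg : (minpoly ℚ ζ).natDegree = 4 := by
      rw [hmin, Polynomial.natDegree_cyclotomic]
      decide
    have hle : (minpoly ℚ ζ).natDegree ≤ q.natDegree :=
      Polynomial.natDegree_le_of_dvd hdvd hq0
    have hq3 : q.natDegree ≤ 3 := by
      rw [hqdef]
      compute_degree
    omega

lemma repr5 (x : ℂ) (hx : x ∈ Algebra.adjoin ℤ {ζ}) :
    ∃ A B C D : ℤ, x = (A:ℂ) + B*ζ + C*ζ^2 + D*ζ^3 := by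
  rw [Algebra.adjoin_singleton_eq_range_aeval] at hx
  obtain ⟨p, hp⟩ := hx
  set r := p %ₘ (X^5 - 1 : ℤ[X]) with hr
  have hmonic : (X^5 - 1 : ℤ[X]).Monic := by
    have := Polynomial.monic_X_pow_sub_C (1:ℤ) (n := 5) (by norm_num)
    simpa using this
  have hrdeg : r.natDegree < 5 := by
    by_cases h0 : r = 0
    · rw [h0]; simp
    · have := Polynomial.degree_modByMonic_lt p hmonic
      rw [← hr] at this
      have hd : (X^5 - 1 : ℤ[X]).degree = 5 := by
        have := Polynomial.degree_X_pow_sub_C (n := 5) (by norm_num) (1:ℤ)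
        simpa using this
      rw [hd] at this
      exact (Polynomial.natDegree_lt_iff_degree_lt h0).2 this
  have haev : aeval ζ r = x := by
    have hdiv := Polynomial.modByMonic_add_div p (X^5 - 1 : ℤ[X])
    have := congrArg (aeval ζ) hdiv
    simp only [map_add, map_mul, map_sub, map_pow, map_one, aeval_X] at this
    rw [h5] at this
    simp at this
    rw [← hr] at this
    exact this.trans hp
  have hsumr : aeval ζ r = ∑ i ∈ Finset.range 5, r.coeff i • ζ ^ i :=
    Polynomial.aeval_eq_sum_range' hrdeg ζ
  refine ⟨r.coeff 0 - r.coeff 4, r.coeff 1 - r.coeff 4,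
          r.coeff 2 - r.coeff 4, r.coeff 3 - r.coeff 4, ?_⟩
  rw [← haev, hsumr]
  simp only [Finset.sum_range_succ, Finset.sum_range_zero, zsmul_eq_mul]
  push_cast
  linear_combination ((r.coeff 4 : ℂ)) * hsum

lemma zmod5 : ∀ a b c d : ZMod 5,
    ¬(a^2 + b^2 + c^2 + d^2 - (a*b + b*c + c*d) = 4 ∧
      a*b + b*c + c*d - (a*c + a*d + b*d) = 1) := by decide


lemma hu5 : ζ^2 + ζ^3 = -u5 := by
  have h1 : ζ^2 + ζ^3 = -1 - (ζ + ζ^4) := by linear_combination hsum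
  rw [h1, hs, u5]
  push_cast
  ring

end AuxLemmas

/-- `4 + u = (9+√5)/2` is totally positive in `𝒪_k`, yet there is no `α ∈ ℤ[ζ₅]` with
`α·ᾱ = 4 + u`. -/
theorem stmt_16 :
    (0 < (9 + Real.sqrt 5) / 2 ∧ 0 < (9 - Real.sqrt 5) / 2) ∧
    ¬ ∃ α : OF, (α : ℂ) * conj (α : ℂ) = 4 + u5 := by
  have hsqrt5 : Real.sqrt 5 < 3 := by
    nlinarith [Real.sq_sqrt (show (0:ℝ) ≤ 5 by norm_num), Real.sqrt_nonneg 5]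
  refine ⟨⟨by positivity, by linarith⟩, ?_⟩
  rintro ⟨α, heq⟩
  obtain ⟨A, B, C, D, hα⟩ := repr5 (α : ℂ) α.2
  have hconjα : conj (α : ℂ) = (A:ℂ) + B*ζ^4 + C*ζ^3 + D*ζ^2 := by
    rw [hα]
    simp only [map_add, map_mul, map_pow, map_intCast, hconjζ]
    linear_combination ((C:ℂ)*ζ^3 + (D:ℂ)*(ζ^7 + ζ^2)) * h5
  have heq' : ((A:ℂ) + B*ζ + C*ζ^2 + D*ζ^3) * ((A:ℂ) + B*ζ^4 + C*ζ^3 + D*ζ^2)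
      = 4 - ζ^2 - ζ^3 := by
    rw [← hα, ← hconjα, heq]
    linear_combination hu5
  have key := indep (A^2 + B^2 + C^2 + D^2 - (A*B + B*C + C*D) - 4) 0
      (A*C + A*D + B*D - (A*B + B*C + C*D) + 1)
      (A*C + A*D + B*D - (A*B + B*C + C*D) + 1)
      (by
        push_cast
        linear_combination heq'
          - (((B:ℂ)^2 + (C:ℂ)^2 + (D:ℂ)^2) + ((B:ℂ)*C + (C:ℂ)*D)*ζ + (B:ℂ)*D*ζ^2) * h5
          - ((A:ℂ)*B + (B:ℂ)*C + (C:ℂ)*D) * hsum)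
  obtain ⟨k1, -, k2, -⟩ := key
  apply zmod5 (A : ZMod 5) (B : ZMod 5) (C : ZMod 5) (D : ZMod 5)
  constructor
  · have := congrArg (fun n : ℤ => (n : ZMod 5)) k1
    push_cast at this
    linear_combination this
  · have := congrArg (fun n : ℤ => (n : ZMod 5)) k2
    push_cast at this
    linear_combination -this
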